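/- Let X be a real Hilbert space, Y a real vector space, and a : X×Y → ℝ∪{±∞} such that for every y ∈ Y the function a(·,y) : X → ℝ∪{+∞} is proper Φ_lsc-convex on X, and for every x ∈ X the function a(x,·) : Y → ℝ∪{±∞} is concave on Y. Then the following are equivalent: (i) for every α ∈ ℝ with α < inf_{x∈X} sup_{y∈Y} a(x,y), there exist y₁, y₂ ∈ Y and φ₁ ∈ supp(a(·,y₁)), φ₂ ∈ supp(a(·,y₂)) such that {x : φ₁(x) < α} ∩ {x : φ₂(x) < α} = ∅; (ii) sup_{y∈Y} inf_{x∈X} a(x,y) = inf_{x∈X} sup_{y∈Y} a(x,y). -/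

import Mathlib

open scoped RealInnerProductSpace

noncomputable section

/-- The class `Φ_lsc` of continuous functions `x ↦ -a‖x‖² + ⟪v,x⟫ + c` with `a ≥ 0`. -/
def PhiLsc (X : Type*) [NormedAddCommGroup X] [InnerProductSpace ℝ X] : Set (X → ℝ) :=
  {φ | ∃ a : ℝ, ∃ v : X, ∃ c : ℝ, 0 ≤ a ∧ ∀ x, φ x = -a * ‖x‖ ^ 2 + ⟪v, x⟫ + c}

/-- The support set `supp(f) = {φ ∈ Φ_lsc : φ ≤ f}` of `f : X → ℝ∪{+∞}`. -/
def PhiSupp {X : Type*} [NormedAddCommGroup X] [InnerProductSpace ℝ X] (f : X → EReal) :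
    Set (X → ℝ) :=
  {φ | φ ∈ PhiLsc X ∧ ∀ x, (φ x : EReal) ≤ f x}

/-- The effective domain of `f`. -/
def PhiDom {X : Type*} (f : X → EReal) : Set X := {x | f x < ⊤}

/-- `f` is `Φ_lsc`-convex: it is the pointwise supremum of its support set. -/
def PhiConvexOn {X : Type*} [NormedAddCommGroup X] [InnerProductSpace ℝ X] (f : X → EReal) :
    Prop :=
  ∀ x, f x = ⨆ φ ∈ PhiSupp f, (φ x : EReal)

/-- The set of `ε`-`Φ_lsc`-subgradients of `f` at `xb`:
pairs `(a,v)`, `a ≥ 0`, with `f x - f xb ≥ ⟪v, x - xb⟫ - a‖x‖² + a‖xb‖² - ε` for all `x`. -/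
def SubLscE {X : Type*} [NormedAddCommGroup X] [InnerProductSpace ℝ X] (f : X → EReal)
    (ε : ℝ) (xb : X) : Set (ℝ × X) :=
  {p | 0 ≤ p.1 ∧ ∀ x : X,
    f xb + ((⟪p.2, x - xb⟫ - p.1 * ‖x‖ ^ 2 + p.1 * ‖xb‖ ^ 2 - ε : ℝ) : EReal) ≤ f x}

/-- The set of local `Φ_lsc`-subgradients of `f` at `xb`. -/
def SubLscLoc {X : Type*} [NormedAddCommGroup X] [InnerProductSpace ℝ X] (f : X → EReal)
    (xb : X) : Set (ℝ × X) :=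
  {p | 0 ≤ p.1 ∧ ∃ δ : ℝ, 0 < δ ∧ ∀ x : X, ‖x - xb‖ < δ →
    f xb + ((⟪p.2, x - xb⟫ - p.1 * ‖x‖ ^ 2 + p.1 * ‖xb‖ ^ 2 : ℝ) : EReal) ≤ f x}

/-- `f` is paraconvex (with exponent 2). -/
def ParaconvexOn {X : Type*} [NormedAddCommGroup X] [InnerProductSpace ℝ X]
    (f : X → EReal) : Prop :=
  ∃ C : ℝ, 0 < C ∧ ∀ x y : X, ∀ t : ℝ, t ∈ Set.Icc (0 : ℝ) 1 →
    f (t • x + (1 - t) • y) ≤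
      (t : EReal) * f x + ((1 - t : ℝ) : EReal) * f y + ((C * ‖x - y‖ ^ 2 : ℝ) : EReal)

/-- The proximal subdifferential of `f` at `xb`. -/
def ProxSub {X : Type*} [NormedAddCommGroup X] [InnerProductSpace ℝ X] (f : X → EReal)
    (xb : X) : Set X :=
  {v | ∃ δ : ℝ, 0 < δ ∧ ∃ ρ : ℝ, 0 ≤ ρ ∧ ∀ x : X, ‖x - xb‖ < δ →
    f xb + ((⟪v, x - xb⟫ - ρ / 2 * ‖x - xb‖ ^ 2 : ℝ) : EReal) ≤ f x}

/-- The Dini subdifferential of `f` at `xb`. -/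
def DiniSub {X : Type*} [NormedAddCommGroup X] [InnerProductSpace ℝ X] (f : X → EReal)
    (xb : X) : Set X :=
  {w | ∀ h : X, ∀ t : ℕ → ℝ, ∀ u : ℕ → X, (∀ n, 0 < t n) →
    Filter.Tendsto t Filter.atTop (nhds 0) → Filter.Tendsto u Filter.atTop (nhds h) →
    ((⟪w, h⟫ : ℝ) : EReal) ≤
      Filter.liminf (fun n => (f (xb + t n • u n) - f xb) * (((t n)⁻¹ : ℝ) : EReal)) Filter.atTop}

/-- The `Φ_lsc`-subgradients of a real-valued `f` at `xb`. -/
def SubLscR {X : Type*} [NormedAddCommGroup X] [InnerProductSpace ℝ X] (f : X → ℝ)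
    (xb : X) : Set (ℝ × X) :=
  {p | 0 ≤ p.1 ∧ ∀ x : X,
    ⟪p.2, x - xb⟫ - p.1 * ‖x‖ ^ 2 + p.1 * ‖xb‖ ^ 2 ≤ f x - f xb}

section MinimaxAux

lemma ereal_mul_mono (t : ℝ) (ht : 0 ≤ t) {b c : EReal} (h : b ≤ c) :
    (t : EReal) * b ≤ (t : EReal) * c := by
  rcases ht.eq_or_lt with rfl | ht'
  · simp [EReal.zero_mul]
  · induction b with
    | bot => rw [EReal.coe_mul_bot_of_pos ht']; exact bot_le
    | top => rw [top_le_iff.mp h]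
    | coe x =>
      induction c with
      | bot => exact absurd h (by simp)
      | top => rw [EReal.coe_mul_top_of_pos ht']; exact le_top
      | coe y =>
        rw [← EReal.coe_mul, ← EReal.coe_mul]
        exact_mod_cast mul_le_mul_of_nonneg_left (EReal.coe_le_coe_iff.mp h) ht


variable {X : Type*} [NormedAddCommGroup X] [InnerProductSpace ℝ X]

/-- the quadratic functions in `Φ_lsc` -/
def phiQ (a : ℝ) (v : X) (c : ℝ) (x : X) : ℝ := -a * ‖x‖ ^ 2 + ⟪v, x⟫ + c

lemma phiQ_line (a : ℝ) (v p w : X) (c s : ℝ) :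
    phiQ a v c (p + s • w) =
      phiQ a v c p + s * ⟪v - (2*a) • p, w⟫ - a * s ^ 2 * ‖w‖ ^ 2 := by
  unfold phiQ
  have h1 : ‖p + s • w‖ ^ 2 = ‖p‖ ^ 2 + 2 * (s * ⟪p, w⟫) + s ^ 2 * ‖w‖ ^ 2 := by
    rw [norm_add_sq_real, real_inner_smul_right, norm_smul]
    simp [mul_pow, sq_abs]
  have h2 : ⟪v, p + s • w⟫ = ⟪v, p⟫ + s * ⟪v, w⟫ := by
    rw [inner_add_right, real_inner_smul_right]
  have h3 : ⟪v - (2*a) • p, w⟫ = ⟪v, w⟫ - (2*a) * ⟪p, w⟫ := by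
    rw [inner_sub_left, real_inner_smul_left]
  rw [h1, h2, h3]; ring

lemma neg_large (A B C : ℝ) (hC : 0 < C) : ∃ s : ℝ, 0 ≤ s ∧ A + s * B - C * s ^ 2 < 0 := by
  set s := max 1 ((|A| + |B| + 1) / C) with hs
  have hs1 : 1 ≤ s := le_max_left _ _
  have hs0 : 0 ≤ s := le_trans zero_le_one hs1
  have hs2 : (|A| + |B| + 1) / C ≤ s := le_max_right _ _
  have h3 : |A| + |B| + 1 ≤ C * s := by rw [div_le_iff₀ hC] at hs2; linarith
  have h4 : s * (|A| + |B| + 1) ≤ s * (C * s) := mul_le_mul_of_nonneg_left h3 hs0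
  have h5 : s * B ≤ s * |B| := mul_le_mul_of_nonneg_left (le_abs_self B) hs0
  have h6 : |A| ≤ s * |A| := le_mul_of_one_le_left (abs_nonneg A) hs1
  refine ⟨s, hs0, ?_⟩
  nlinarith [le_abs_self A]

lemma quad_kill (a₁ a₂ : ℝ) (ha₁ : 0 ≤ a₁) (ha₂ : 0 < a₂) (v₁ v₂ : X) (c₁ c₂ : ℝ) (p w : X)
    (hp : phiQ a₁ v₁ c₁ p < 0) (hw : w ≠ 0) (hwd : ⟪v₁ - (2*a₁) • p, w⟫ ≤ 0) :
    ∃ x : X, phiQ a₁ v₁ c₁ x < 0 ∧ phiQ a₂ v₂ c₂ x < 0 := by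
  have hC : 0 < a₂ * ‖w‖ ^ 2 := mul_pos ha₂ (pow_pos (norm_pos_iff.mpr hw) 2)
  obtain ⟨s, hs0, hneg⟩ := neg_large (phiQ a₂ v₂ c₂ p) (⟪v₂ - (2*a₂) • p, w⟫) (a₂ * ‖w‖ ^ 2) hC
  refine ⟨p + s • w, ?_, ?_⟩
  · rw [phiQ_line]
    have h1 : s * ⟪v₁ - (2*a₁) • p, w⟫ ≤ 0 := mul_nonpos_of_nonneg_of_nonpos hs0 hwd
    nlinarith [mul_nonneg (mul_nonneg ha₁ (sq_nonneg s)) (sq_nonneg ‖w‖)]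
  · rw [phiQ_line]
    nlinarith [hneg]

lemma exists_dir (u d : X) (hd : d ≠ 0) : ∃ w : X, w ≠ 0 ∧ ⟪u, w⟫ ≤ 0 := by
  by_cases hu : u = 0
  · exact ⟨d, hd, by simp [hu]⟩
  · refine ⟨-u, neg_ne_zero.mpr hu, ?_⟩
    rw [inner_neg_right]
    exact neg_nonpos.mpr real_inner_self_nonneg

lemma dich (v₁ v₂ : X) (h1 : v₁ ≠ 0) (h2 : v₂ ≠ 0) :
    (∃ d : X, ⟪v₁, d⟫ < 0 ∧ ⟪v₂, d⟫ < 0) ∨ (∃ l : ℝ, 0 < l ∧ v₂ = -l • v₁) := by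
  have hv₁ : (0:ℝ) < ‖v₁‖ ^ 2 := pow_pos (norm_pos_iff.mpr h1) 2
  have hv₂ : (0:ℝ) < ‖v₂‖ ^ 2 := pow_pos (norm_pos_iff.mpr h2) 2
  set μ : ℝ := ⟪v₁, v₂⟫ / ‖v₁‖ ^ 2 with hμ
  set w : X := v₂ - μ • v₁ with hwdef
  have hw1 : ⟪v₁, w⟫ = 0 := by
    rw [hwdef, inner_sub_right, real_inner_smul_right, hμ, real_inner_self_eq_norm_sq]
    field_simp
    ring
  by_cases hw : w = 0
  · have hv2eq : v₂ = μ • v₁ := by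
      have := hw; rw [hwdef, sub_eq_zero] at this; exact this
    by_cases hμneg : μ < 0
    · exact Or.inr ⟨-μ, by linarith, by rw [hv2eq]; simp⟩
    · push_neg at hμneg
      have hμ0 : μ ≠ 0 := by
        intro h; rw [h, zero_smul] at hv2eq; exact h2 hv2eq
      have hμpos : 0 < μ := lt_of_le_of_ne hμneg (Ne.symm hμ0)
      have hsm : ‖μ • v₁‖ ^ 2 = μ ^ 2 * ‖v₁‖ ^ 2 := by
        rw [norm_smul]; simp [mul_pow, sq_abs]
      refine Or.inl ⟨-(v₁ + v₂), ?_, ?_⟩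
      · rw [inner_neg_right, inner_add_right, real_inner_self_eq_norm_sq, hv2eq,
          real_inner_smul_right, real_inner_self_eq_norm_sq]
        nlinarith
      · rw [inner_neg_right, inner_add_right, real_inner_self_eq_norm_sq, hv2eq,
          real_inner_smul_left, real_inner_self_eq_norm_sq, hsm]
        nlinarith
  · have hww : (0:ℝ) < ‖w‖ ^ 2 := pow_pos (norm_pos_iff.mpr hw) 2
    set K : ℝ := |μ| * ‖v₁‖ ^ 2 / ‖w‖ ^ 2 + 1 with hK
    refine Or.inl ⟨-v₁ - K • w, ?_, ?_⟩
    · rw [inner_sub_right, inner_neg_right, real_inner_smul_right,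
        real_inner_self_eq_norm_sq, hw1]
      nlinarith
    · have hv2eq : v₂ = μ • v₁ + w := by rw [hwdef]; abel
      have hw1' : ⟪w, v₁⟫ = 0 := by rw [real_inner_comm]; exact hw1
      have hval : ⟪v₂, -v₁ - K • w⟫ = -(μ * ‖v₁‖ ^ 2) - K * ‖w‖ ^ 2 := by
        rw [hv2eq, inner_add_left, inner_sub_right, inner_sub_right,
          inner_neg_right, inner_neg_right, real_inner_smul_left, real_inner_smul_left,
          real_inner_smul_right, real_inner_smul_right, hw1, hw1',
          real_inner_self_eq_norm_sq, real_inner_self_eq_norm_sq]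
        ring
      rw [hval, hK]
      have h7 : (|μ| * ‖v₁‖ ^ 2 / ‖w‖ ^ 2) * ‖w‖ ^ 2 = |μ| * ‖v₁‖ ^ 2 := by
        field_simp
      nlinarith [neg_abs_le μ, abs_nonneg μ]

lemma phiQ_zero (v : X) (c : ℝ) (x : X) : phiQ 0 v c x = ⟪v, x⟫ + c := by
  unfold phiQ; ring

lemma phiQ_combine (a₁ a₂ : ℝ) (ha₁ : 0 ≤ a₁) (ha₂ : 0 ≤ a₂) (v₁ v₂ : X) (c₁ c₂ : ℝ)
    (h : ∀ x : X, 0 ≤ phiQ a₁ v₁ c₁ x ∨ 0 ≤ phiQ a₂ v₂ c₂ x) :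
    ∃ t : ℝ, t ∈ Set.Icc (0:ℝ) 1 ∧
      ∀ x : X, 0 ≤ t * phiQ a₁ v₁ c₁ x + (1-t) * phiQ a₂ v₂ c₂ x := by
  by_cases h2 : ∀ x, 0 ≤ phiQ a₂ v₂ c₂ x
  · exact ⟨0, ⟨le_refl 0, zero_le_one⟩, fun x => by simpa using h2 x⟩
  push_neg at h2; obtain ⟨x₀, hx₀⟩ := h2
  have hgx₀ : 0 ≤ phiQ a₁ v₁ c₁ x₀ := (h x₀).resolve_right (not_le.mpr hx₀)
  by_cases h1 : ∀ x, 0 ≤ phiQ a₁ v₁ c₁ x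
  · exact ⟨1, ⟨zero_le_one, le_refl 1⟩, fun x => by simpa using h1 x⟩
  push_neg at h1; obtain ⟨x₁, hx₁⟩ := h1
  have hhx₁ : 0 ≤ phiQ a₂ v₂ c₂ x₁ := (h x₁).resolve_left (not_le.mpr hx₁)
  have hne : x₀ - x₁ ≠ 0 := by
    intro e
    have : x₀ = x₁ := by rwa [sub_eq_zero] at e
    rw [this] at hgx₀; linarith
  have ha₁0 : a₁ = 0 := by
    by_contra hne1
    have ha₁pos : 0 < a₁ := lt_of_le_of_ne ha₁ (Ne.symm hne1)
    obtain ⟨w, hw0, hwd⟩ := exists_dir (v₂ - (2*a₂) • x₀) (x₀ - x₁) hne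
    obtain ⟨x, hg, hh⟩ := quad_kill a₂ a₁ ha₂ ha₁pos v₂ v₁ c₂ c₁ x₀ w hx₀ hw0 hwd
    rcases h x with h' | h' <;> linarith
  have ha₂0 : a₂ = 0 := by
    by_contra hne2
    have ha₂pos : 0 < a₂ := lt_of_le_of_ne ha₂ (Ne.symm hne2)
    obtain ⟨w, hw0, hwd⟩ := exists_dir (v₁ - (2*a₁) • x₁) (x₀ - x₁) hne
    obtain ⟨x, hg, hh⟩ := quad_kill a₁ a₂ ha₁ ha₂pos v₁ v₂ c₁ c₂ x₁ w hx₁ hw0 hwd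
    rcases h x with h' | h' <;> linarith
  subst ha₁0; subst ha₂0
  have hv₁ : v₁ ≠ 0 := by
    intro e; subst e
    rw [phiQ_zero] at hgx₀ hx₁; simp at hgx₀ hx₁; linarith
  have hv₂ : v₂ ≠ 0 := by
    intro e; subst e
    rw [phiQ_zero] at hhx₁ hx₀; simp at hhx₁ hx₀; linarith
  have hnv₁ : (0:ℝ) < ‖v₁‖ ^ 2 := pow_pos (norm_pos_iff.mpr hv₁) 2
  rcases dich v₁ v₂ hv₁ hv₂ with ⟨d, hd1, hd2⟩ | ⟨l, hl, hveq⟩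
  · exfalso
    set s : ℝ := max ((c₁+1)/(-⟪v₁,d⟫)) ((c₂+1)/(-⟪v₂,d⟫)) with hs
    have hs1 : (c₁+1)/(-⟪v₁,d⟫) ≤ s := le_max_left _ _
    have hs2 : (c₂+1)/(-⟪v₂,d⟫) ≤ s := le_max_right _ _
    have e1 : c₁ + 1 ≤ s * (-⟪v₁,d⟫) := by
      rw [div_le_iff₀ (by linarith)] at hs1; linarith
    have e2 : c₂ + 1 ≤ s * (-⟪v₂,d⟫) := by
      rw [div_le_iff₀ (by linarith)] at hs2; linarith
    rcases h (s • d) with h' | h' <;>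
      rw [phiQ_zero, real_inner_smul_right] at h' <;> nlinarith
  · have hinner : ∀ x : X, ⟪v₂, x⟫ = -l * ⟪v₁, x⟫ := fun x => by
      rw [hveq, real_inner_smul_left]
    have hl1 : (0:ℝ) < 1 + l := by linarith
    have hcc : 0 ≤ l * c₁ + c₂ := by
      by_contra hcc; push_neg at hcc
      have hlt : c₂ / (l * ‖v₁‖^2) < (-c₁) / ‖v₁‖^2 := by
        rw [div_lt_div_iff₀ (by positivity) hnv₁]; nlinarith
      set s : ℝ := (c₂ / (l * ‖v₁‖^2) + (-c₁) / ‖v₁‖^2) / 2 with hsdef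
      have hsa : c₂ / (l * ‖v₁‖^2) < s := by rw [hsdef]; linarith
      have hsb : s < (-c₁) / ‖v₁‖^2 := by rw [hsdef]; linarith
      have e1 : s * ‖v₁‖^2 + c₁ < 0 := by
        have := (lt_div_iff₀ hnv₁).mp hsb; linarith
      have e2 : -l * (s * ‖v₁‖^2) + c₂ < 0 := by
        rw [div_lt_iff₀ (by positivity : (0:ℝ) < l * ‖v₁‖^2)] at hsa; nlinarith
      rcases h (s • v₁) with h' | h' <;>
        rw [phiQ_zero, real_inner_smul_right] at h'
      · rw [real_inner_self_eq_norm_sq] at h'; linarith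
      · rw [hinner, real_inner_self_eq_norm_sq] at h'; nlinarith
    refine ⟨l/(1+l), ⟨div_nonneg hl.le hl1.le, by rw [div_le_one hl1]; linarith⟩, ?_⟩
    intro x
    have e : l/(1+l) * phiQ 0 v₁ c₁ x + (1 - l/(1+l)) * phiQ 0 v₂ c₂ x
        = (l*c₁+c₂)/(1+l) := by
      rw [phiQ_zero, phiQ_zero, hinner]; field_simp; ring
    rw [e]
    exact div_nonneg hcc hl1.le

end MinimaxAux

/-- the general minimax theorem — the intersection property on supports at
every level `α` below `inf sup` is equivalent to the minimax equality. -/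
theorem stmt_15 {X : Type*} [NormedAddCommGroup X] [InnerProductSpace ℝ X] [CompleteSpace X]
    {Y : Type*} [AddCommGroup Y] [Module ℝ Y]
    (a : X × Y → EReal)
    (hconv : ∀ y : Y, PhiConvexOn (fun x => a (x, y)))
    (hsupp : ∀ y : Y, (PhiSupp (fun x => a (x, y))).Nonempty)
    (hdom : ∀ y : Y, (PhiDom (fun x => a (x, y))).Nonempty)
    (hconc : ∀ x : X, ∀ y₁ y₂ : Y, ∀ t ∈ Set.Icc (0 : ℝ) 1,
      (t : EReal) * a (x, y₁) + ((1 - t : ℝ) : EReal) * a (x, y₂) ≤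
        a (x, t • y₁ + (1 - t) • y₂)) :
    ((∀ α : ℝ, (α : EReal) < ⨅ x : X, ⨆ y : Y, a (x, y) →
        ∃ y₁ y₂ : Y, ∃ φ₁ ∈ PhiSupp (fun x => a (x, y₁)), ∃ φ₂ ∈ PhiSupp (fun x => a (x, y₂)),
          {x : X | φ₁ x < α} ∩ {x : X | φ₂ x < α} = ∅) ↔
      (⨆ y : Y, ⨅ x : X, a (x, y)) = ⨅ x : X, ⨆ y : Y, a (x, y)) := by
  have hSI : (⨆ y : Y, ⨅ x : X, a (x, y)) ≤ ⨅ x : X, ⨆ y : Y, a (x, y) :=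
    iSup_le fun y => le_iInf fun x =>
      le_trans (iInf_le (fun x' => a (x', y)) x) (le_iSup (fun y' => a (x, y')) y)
  constructor
  · intro hi
    refine le_antisymm hSI ?_
    by_contra h'
    have hlt : (⨆ y : Y, ⨅ x : X, a (x, y)) < ⨅ x : X, ⨆ y : Y, a (x, y) := not_le.mp h'
    obtain ⟨α, hα1, hα2⟩ := EReal.exists_between_coe_real hlt
    obtain ⟨y₁, y₂, φ₁, hφ₁, φ₂, hφ₂, hdisj⟩ := hi α hα2
    obtain ⟨⟨a₁, v₁, c₁, ha₁, he₁⟩, hle₁⟩ := hφ₁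
    obtain ⟨⟨a₂, v₂, c₂, ha₂, he₂⟩, hle₂⟩ := hφ₂
    have hdis : ∀ x : X, 0 ≤ phiQ a₁ v₁ (c₁ - α) x ∨ 0 ≤ phiQ a₂ v₂ (c₂ - α) x := by
      intro x
      have hx := Set.eq_empty_iff_forall_notMem.mp hdisj x
      simp only [Set.mem_inter_iff, Set.mem_setOf_eq] at hx
      rcases not_and_or.mp hx with hx' | hx'
      · left; push_neg at hx'
        have := he₁ x; unfold phiQ; linarith
      · right; push_neg at hx'
        have := he₂ x; unfold phiQ; linarith
    obtain ⟨t, ⟨ht0, ht1⟩, hcomb⟩ := phiQ_combine a₁ a₂ ha₁ ha₂ v₁ v₂ _ _ hdis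
    have hmain : ∀ x : X, (α : EReal) ≤ a (x, t • y₁ + (1-t) • y₂) := by
      intro x
      have e1 : phiQ a₁ v₁ (c₁ - α) x = φ₁ x - α := by unfold phiQ; rw [he₁ x]; ring
      have e2 : phiQ a₂ v₂ (c₂ - α) x = φ₂ x - α := by unfold phiQ; rw [he₂ x]; ring
      have h0 : α ≤ t * φ₁ x + (1-t) * φ₂ x := by
        have hc := hcomb x
        rw [e1, e2] at hc
        have hr : t * φ₁ x + (1-t) * φ₂ x - α = t * (φ₁ x - α) + (1-t) * (φ₂ x - α) := by
          ring
        linarith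
      calc (α : EReal) ≤ ((t * φ₁ x + (1-t) * φ₂ x : ℝ) : EReal) :=
            EReal.coe_le_coe_iff.mpr h0
        _ = (t : EReal) * (φ₁ x : EReal) + ((1-t : ℝ) : EReal) * (φ₂ x : EReal) := by
            rw [EReal.coe_add, EReal.coe_mul, EReal.coe_mul]
        _ ≤ (t : EReal) * a (x, y₁) + ((1-t : ℝ) : EReal) * a (x, y₂) :=
            add_le_add (ereal_mul_mono t ht0 (hle₁ x)) (ereal_mul_mono (1-t) (by linarith) (hle₂ x))
        _ ≤ a (x, t • y₁ + (1-t) • y₂) := hconc x y₁ y₂ t ⟨ht0, ht1⟩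
    have hfin : (α : EReal) ≤ ⨆ y : Y, ⨅ x : X, a (x, y) :=
      le_trans (le_iInf hmain) (le_iSup (fun y => ⨅ x : X, a (x, y)) (t • y₁ + (1-t) • y₂))
    exact absurd hfin (not_le.mpr hα1)
  · intro heq α hα
    rw [← heq] at hα
    obtain ⟨y₁, hy₁⟩ := lt_iSup_iff.mp hα
    have hmem : (fun _ : X => α) ∈ PhiSupp (fun x => a (x, y₁)) := by
      refine ⟨⟨0, 0, α, le_refl 0, fun x => by simp⟩, fun x => ?_⟩
      exact le_of_lt (lt_of_lt_of_le hy₁ (iInf_le (fun x' => a (x', y₁)) x))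
    refine ⟨y₁, y₁, (fun _ => α), hmem, (fun _ => α), hmem, ?_⟩
    ext x; simp
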